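/- arXiv:2205.10694 — 4 statements merged into one kernel-verified Lean document; each statement's English description precedes it below -/
import Mathlib

section
/- Let G be an infinite discrete group and let ℓ¹(ℕ) carry the pointwise product. Then the generalized group algebra (ℓ¹(G, ℓ¹(ℕ)), ∗) is not strongly Arens irregular; more precisely, its right topological center Z_t^{(r)}(ℓ¹(G, ℓ¹(ℕ))**) strictly contains the canonical image of ℓ¹(G, ℓ¹(ℕ)). -/
open NormedSpace ContinuousLinearMap

section ArensFramework

variable {B : Type*} [NormedAddCommGroup B] [NormedSpace ℂ B]

noncomputable def rightTranslate (m : B →L[ℂ] B →L[ℂ] B) (ω : StrongDual ℂ B) (a : B) : StrongDual ℂ B :=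
  ω.comp (m a)

noncomputable def leftTranslate (m : B →L[ℂ] B →L[ℂ] B) (ω : StrongDual ℂ B) (a : B) : StrongDual ℂ B :=
  ω.comp (m.flip a)

noncomputable def subL (m : B →L[ℂ] B →L[ℂ] B) (H : StrongDual ℂ (StrongDual ℂ B)) (ω : StrongDual ℂ B) :
    StrongDual ℂ B :=
  LinearMap.mkContinuous
    { toFun := fun a => H (rightTranslate m ω a)
      map_add' := fun a b => by
        simp [rightTranslate, map_add, ContinuousLinearMap.comp_add]
      map_smul' := fun c a => by
        simp [rightTranslate, map_smul, ContinuousLinearMap.comp_smulₛₗ] }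
    (‖H‖ * ‖ω‖ * ‖m‖)
    (fun a => by
      have h1 : ‖H (rightTranslate m ω a)‖ ≤ ‖H‖ * ‖rightTranslate m ω a‖ := H.le_opNorm _
      have h2 : ‖rightTranslate m ω a‖ ≤ ‖ω‖ * ‖m a‖ := opNorm_comp_le _ _
      have h3 : ‖m a‖ ≤ ‖m‖ * ‖a‖ := m.le_opNorm a
      calc ‖H (rightTranslate m ω a)‖ ≤ ‖H‖ * (‖ω‖ * (‖m‖ * ‖a‖)) := by
            refine h1.trans (by gcongr; exact h2.trans (by gcongr))
        _ = ‖H‖ * ‖ω‖ * ‖m‖ * ‖a‖ := by ring)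

noncomputable def subR (m : B →L[ℂ] B →L[ℂ] B) (F : StrongDual ℂ (StrongDual ℂ B)) (ω : StrongDual ℂ B) :
    StrongDual ℂ B :=
  LinearMap.mkContinuous
    { toFun := fun a => F (leftTranslate m ω a)
      map_add' := fun a b => by
        simp [leftTranslate, map_add, ContinuousLinearMap.comp_add]
      map_smul' := fun c a => by
        simp [leftTranslate, map_smul, ContinuousLinearMap.comp_smulₛₗ] }
    (‖F‖ * ‖ω‖ * ‖m‖)
    (fun a => by
      have h1 : ‖F (leftTranslate m ω a)‖ ≤ ‖F‖ * ‖leftTranslate m ω a‖ := F.le_opNorm _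
      have h2 : ‖leftTranslate m ω a‖ ≤ ‖ω‖ * ‖m.flip a‖ := opNorm_comp_le _ _
      have h3 : ‖m.flip a‖ ≤ ‖m.flip‖ * ‖a‖ := m.flip.le_opNorm a
      calc ‖F (leftTranslate m ω a)‖ ≤ ‖F‖ * (‖ω‖ * (‖m‖ * ‖a‖)) := by
            refine h1.trans ?_
            gcongr
            exact h2.trans (by gcongr; exact h3.trans (by rw [opNorm_flip]))
        _ = ‖F‖ * ‖ω‖ * ‖m‖ * ‖a‖ := by ring)

/-- `(F □ H) ω = F (_H ω)` : first Arens product, evaluated at `ω`. -/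
noncomputable def arensBox (m : B →L[ℂ] B →L[ℂ] B) (F H : StrongDual ℂ (StrongDual ℂ B))
    (ω : StrongDual ℂ B) : ℂ :=
  F (subL m H ω)

/-- `(F ◇ H) ω = H (ω_F)` : second Arens product, evaluated at `ω`. -/
noncomputable def arensDia (m : B →L[ℂ] B →L[ℂ] B) (F H : StrongDual ℂ (StrongDual ℂ B))
    (ω : StrongDual ℂ B) : ℂ :=
  H (subR m F ω)

end ArensFramework

open Filter


-- ultrafilter limit machinery
open Classical in
noncomputable def ulim (U : Ultrafilter ℕ) (f : ℕ → ℂ) : ℂ :=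
  if h : ∃ c, Tendsto f (U : Filter ℕ) (nhds c) then h.choose else 0

theorem ulim_exists {U : Ultrafilter ℕ} {f : ℕ → ℂ} {C : ℝ} (hC : ∀ n, ‖f n‖ ≤ C) :
    ∃ c, Tendsto f (U : Filter ℕ) (nhds c) := by
  have hle : (U.map f : Filter ℂ) ≤ Filter.principal (Metric.closedBall 0 C) := by
    rw [Filter.le_principal_iff]
    have : ∀ n, f n ∈ Metric.closedBall (0:ℂ) C := by
      intro n; simpa [Metric.mem_closedBall, dist_eq_norm] using hC n
    exact Filter.mem_map.2 (Filter.univ_mem' this)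
  obtain ⟨c, -, hc⟩ := (isCompact_closedBall (0:ℂ) C).ultrafilter_le_nhds (U.map f) hle
  exact ⟨c, hc⟩

theorem ulim_eq {U : Ultrafilter ℕ} {f : ℕ → ℂ} {c : ℂ}
    (h : Tendsto f (U : Filter ℕ) (nhds c)) : ulim U f = c := by
  rw [ulim, dif_pos (⟨c, h⟩ : ∃ c, Tendsto f (U : Filter ℕ) (nhds c))]
  exact tendsto_nhds_unique (⟨c, h⟩ : ∃ c, Tendsto f (U : Filter ℕ) (nhds c)).choose_spec h

theorem ulim_tendsto {U : Ultrafilter ℕ} {f : ℕ → ℂ} {C : ℝ} (hC : ∀ n, ‖f n‖ ≤ C) :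
    Tendsto f (U : Filter ℕ) (nhds (ulim U f)) := by
  rw [ulim, dif_pos (ulim_exists hC)]
  exact (ulim_exists hC).choose_spec

theorem ulim_of_tendsto {U : Ultrafilter ℕ} (hU : (U : Filter ℕ) ≤ atTop) {f : ℕ → ℂ} {c : ℂ}
    (h : Tendsto f atTop (nhds c)) : ulim U f = c :=
  ulim_eq (h.mono_left hU)

theorem ulim_norm_le {U : Ultrafilter ℕ} {f : ℕ → ℂ} {C : ℝ} (hC : ∀ n, ‖f n‖ ≤ C) :
    ‖ulim U f‖ ≤ C :=
  le_of_tendsto ((ulim_tendsto hC).norm) (Filter.Eventually.of_forall hC)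


section L1
variable {α : Type*} {E : α → Type*} [∀ i, NormedAddCommGroup (E i)]

theorem l1_hasSum_norm (f : lp E 1) : HasSum (fun i => ‖f i‖) ‖f‖ := by
  have h := lp.hasSum_norm (p := 1) (by norm_num) f
  simpa using h

theorem l1_norm_le_of_le {f : lp E 1} {g : α → ℝ} {c : ℝ} (hg : HasSum g c)
    (h : ∀ i, ‖f i‖ ≤ g i) : ‖f‖ ≤ c :=
  hasSum_le h (l1_hasSum_norm f) hg

end L1

section Seq
variable {G : Type*} [Group G]

local notation "𝔸" => lp (fun _ : ℕ => ℂ) 1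
local notation "𝔹" => lp (fun _ : G => lp (fun _ : ℕ => ℂ) 1) 1

open Classical in
/-- basis vector in ℓ¹(ℕ) -/
noncomputable def eA (k : ℕ) : 𝔸 := lp.single 1 k (1 : ℂ)

open Classical in
noncomputable def bv (g : G) (k : ℕ) : @lp G (fun _ => lp (fun _ : ℕ => ℂ) 1) _ 1 :=
  lp.single 1 g (eA k)

noncomputable def aSeq (G : Type*) [Group G] (n : ℕ) :
    lp (fun _ : G => lp (fun _ : ℕ => ℂ) 1) 1 :=
  (((n : ℂ) + 1)⁻¹) • ∑ k ∈ Finset.range (n + 1), bv (1 : G) k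

theorem eA_apply (k j : ℕ) : (eA k : ∀ _ : ℕ, ℂ) j = if j = k then 1 else 0 := by
  classical
  rcases eq_or_ne j k with rfl | h
  · simp [eA, lp.single_apply_self]
  · simp [eA, lp.single_apply_ne _ _ _ h, h]

theorem bv_apply_ne (g : G) (k : ℕ) {x : G} (h : x ≠ g) : bv g k x = 0 := by
  classical exact lp.single_apply_ne _ _ _ h

theorem bv_apply_self (g : G) (k : ℕ) : bv g k g = eA k := by
  classical exact lp.single_apply_self _ _ _

theorem norm_eA (k : ℕ) : ‖eA k‖ = 1 := by
  classical
  have := lp.norm_single (p := 1) (E := fun _ : ℕ => ℂ) (by norm_num)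
    k (1 : ℂ)
  simpa [eA] using this

theorem norm_bv (g : G) (k : ℕ) : ‖bv g k‖ = 1 := by
  classical
  have := lp.norm_single (p := 1) (E := fun _ : G => lp (fun _ : ℕ => ℂ) 1) (by norm_num)
    g (eA k)
  simpa [bv, norm_eA] using this

open Classical in
theorem aSeq_apply (n : ℕ) (y : G) (k : ℕ) :
    (aSeq G n y) k = if y = 1 ∧ k ≤ n then ((n : ℂ) + 1)⁻¹ else 0 := by
  classical
  have h0 : ⇑(aSeq G n) = ((n : ℂ) + 1)⁻¹ • ⇑(∑ j ∈ Finset.range (n+1), bv (1:G) j) :=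
    lp.coeFn_smul _ _
  have h1 : ⇑(∑ j ∈ Finset.range (n+1), bv (1:G) j)
      = ∑ j ∈ Finset.range (n+1), ⇑(bv (1:G) j) := lp.coeFn_sum _ _
  have h2 : aSeq G n y = ((n : ℂ) + 1)⁻¹ • ∑ j ∈ Finset.range (n+1), bv (1:G) j y := by
    rw [show aSeq G n y = (⇑(aSeq G n)) y from rfl, h0, Pi.smul_apply, h1, Finset.sum_apply]
  rcases eq_or_ne y 1 with rfl | hy
  · have h3 : ∀ j ∈ Finset.range (n+1), bv (1 : G) j (1:G) = eA j :=
      fun j _ => bv_apply_self _ _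
    rw [h2, Finset.sum_congr rfl h3]
    have h4 : (((n : ℂ) + 1)⁻¹ • ∑ j ∈ Finset.range (n+1), eA j) k
        = ((n : ℂ) + 1)⁻¹ • ((∑ j ∈ Finset.range (n+1), eA j : 𝔸) k) := by
      rw [show ((((n : ℂ) + 1)⁻¹ • ∑ j ∈ Finset.range (n+1), eA j : 𝔸)) k
          = (⇑(((n : ℂ) + 1)⁻¹ • (∑ j ∈ Finset.range (n+1), eA j : 𝔸))) k from rfl,
        lp.coeFn_smul, Pi.smul_apply]
    have h5 : ((∑ j ∈ Finset.range (n+1), eA j : 𝔸)) k = ∑ j ∈ Finset.range (n+1), eA j k := by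
      rw [show ((∑ j ∈ Finset.range (n+1), eA j : 𝔸)) k
          = (⇑(∑ j ∈ Finset.range (n+1), eA j : 𝔸)) k from rfl, lp.coeFn_sum, Finset.sum_apply]
    rw [h4, h5]
    simp only [eA_apply]
    rcases le_or_gt k n with hk | hk
    · rw [Finset.sum_ite_eq (Finset.range (n+1)) k (fun _ => (1:ℂ))]
      simp [Nat.lt_succ_iff.2 hk, hk]
    · have hne : ∀ j ∈ Finset.range (n+1), (if k = j then (1:ℂ) else 0) = 0 := by
        intro j hj
        have : k ≠ j := by have := Finset.mem_range.1 hj; omega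
        simp [this]
      rw [Finset.sum_congr rfl hne]
      simp [Nat.not_le.2 hk]
  · have h3 : ∀ j ∈ Finset.range (n+1), bv (1 : G) j y = 0 := fun j _ => bv_apply_ne _ _ hy
    rw [h2, Finset.sum_congr rfl h3]
    simp [hy]

theorem norm_aSeq_le (n : ℕ) : ‖aSeq G n‖ ≤ 1 := by
  rw [aSeq]
  calc ‖(((n : ℂ) + 1)⁻¹) • ∑ k ∈ Finset.range (n + 1), bv (1 : G) k‖
      ≤ ‖(((n : ℂ) + 1)⁻¹)‖ * ∑ k ∈ Finset.range (n + 1), ‖bv (1 : G) k‖ := by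
        rw [norm_smul]
        gcongr
        exact norm_sum_le _ _
    _ ≤ 1 := by
        simp only [norm_bv, Finset.sum_const, Finset.card_range, nsmul_eq_mul, mul_one, norm_inv]
        have hn : ‖(n : ℂ) + 1‖ = (n : ℝ) + 1 := by
          rw [show ((n:ℂ)+1) = ((n+1:ℕ):ℂ) by push_cast; ring, Complex.norm_natCast]
          push_cast; ring
        have hc : ((n + 1 : ℕ) : ℝ) = (n : ℝ) + 1 := by push_cast; ring
        rw [hn, hc, inv_mul_cancel₀ (by positivity)]

end Seq

section Conv

variable {G : Type*} [Group G]

local notation "𝔸" => lp (fun _ : ℕ => ℂ) 1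
local notation "𝔹" => lp (fun _ : G => lp (fun _ : ℕ => ℂ) 1) 1

theorem subL_apply {B : Type*} [NormedAddCommGroup B] [NormedSpace ℂ B]
    (m : B →L[ℂ] B →L[ℂ] B) (H : StrongDual ℂ (StrongDual ℂ B)) (ω : StrongDual ℂ B) (b : B) :
    subL m H ω b = H (rightTranslate m ω b) := rfl

theorem subR_apply {B : Type*} [NormedAddCommGroup B] [NormedSpace ℂ B]
    (m : B →L[ℂ] B →L[ℂ] B) (F : StrongDual ℂ (StrongDual ℂ B)) (ω : StrongDual ℂ B) (b : B) :
    subR m F ω b = F (leftTranslate m ω b) := rfl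

open Classical in
theorem m_aSeq_apply (m : 𝔹 →L[ℂ] 𝔹 →L[ℂ] 𝔹) (hm : ∀ (f g : 𝔹) (x : G) (k : ℕ), HasSum (fun s : G => f s k * g (s⁻¹ * x) k) (m f g x k)) (b : 𝔹) (n : ℕ) (x : G) (k : ℕ) :
    m b (aSeq G n) x k = (if k ≤ n then ((n : ℂ) + 1)⁻¹ else 0) * b x k := by
  classical
  have h := hm b (aSeq G n) x k
  have hfun : (fun s : G => b s k * aSeq G n (s⁻¹ * x) k)
      = fun s => if s = x then (if k ≤ n then ((n : ℂ) + 1)⁻¹ else 0) * b x k else 0 := by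
    funext s
    rcases eq_or_ne s x with rfl | hs
    · rw [if_pos rfl, inv_mul_cancel, aSeq_apply]
      simp only [true_and]
      by_cases hk : k ≤ n <;> simp [hk, mul_comm]
    · rw [if_neg hs, aSeq_apply, if_neg, mul_zero]
      rintro ⟨h1, -⟩
      exact hs (inv_mul_eq_one.1 h1)
  rw [hfun] at h
  exact h.unique (hasSum_ite_eq x _)

theorem norm_m_aSeq_le (m : 𝔹 →L[ℂ] 𝔹 →L[ℂ] 𝔹) (hm : ∀ (f g : 𝔹) (x : G) (k : ℕ), HasSum (fun s : G => f s k * g (s⁻¹ * x) k) (m f g x k)) (b : 𝔹) (n : ℕ) :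
    ‖m b (aSeq G n)‖ ≤ ((n : ℝ) + 1)⁻¹ * ‖b‖ := by
  have hinner : ∀ x : G, ‖m b (aSeq G n) x‖ ≤ ((n : ℝ) + 1)⁻¹ * ‖b x‖ := by
    intro x
    refine l1_norm_le_of_le ((l1_hasSum_norm (b x)).mul_left _) (fun k => ?_)
    rw [m_aSeq_apply m hm b n x k, norm_mul]
    refine mul_le_mul_of_nonneg_right ?_ (norm_nonneg _)
    by_cases hk : k ≤ n
    · rw [if_pos hk, norm_inv]
      have hn : ‖(n : ℂ) + 1‖ = (n : ℝ) + 1 := by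
        rw [show ((n:ℂ)+1) = ((n+1:ℕ):ℂ) by push_cast; ring, Complex.norm_natCast]
        push_cast; ring
      rw [hn]
    · rw [if_neg hk, norm_zero]
      positivity
  refine l1_norm_le_of_le ((l1_hasSum_norm b).mul_left _) (fun x => hinner x)

theorem tendsto_omegamb (m : 𝔹 →L[ℂ] 𝔹 →L[ℂ] 𝔹) (hm : ∀ (f g : 𝔹) (x : G) (k : ℕ), HasSum (fun s : G => f s k * g (s⁻¹ * x) k) (m f g x k)) (b : 𝔹) (ω : StrongDual ℂ 𝔹) :
    Filter.Tendsto (fun n => ω (m b (aSeq G n))) atTop (nhds 0) := by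
  rw [tendsto_zero_iff_norm_tendsto_zero]
  have hb : ∀ n : ℕ, ‖ω (m b (aSeq G n))‖ ≤ (‖ω‖ * ‖b‖) * (1 / ((n : ℝ) + 1)) := by
    intro n
    calc ‖ω (m b (aSeq G n))‖ ≤ ‖ω‖ * ‖m b (aSeq G n)‖ := ω.le_opNorm _
      _ ≤ ‖ω‖ * (((n : ℝ) + 1)⁻¹ * ‖b‖) := by gcongr; exact norm_m_aSeq_le m hm b n
      _ = (‖ω‖ * ‖b‖) * (1 / ((n : ℝ) + 1)) := by ring
  have hlim : Filter.Tendsto (fun n : ℕ => (‖ω‖ * ‖b‖) * (1 / ((n : ℝ) + 1))) atTop (nhds 0) := by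
    have := tendsto_one_div_add_atTop_nhds_zero_nat.const_mul (‖ω‖ * ‖b‖)
    simpa using this
  exact squeeze_zero (fun n => norm_nonneg _) hb hlim

theorem norm_leftTranslate_aSeq_le (m : 𝔹 →L[ℂ] 𝔹 →L[ℂ] 𝔹) (hm : ∀ (f g : 𝔹) (x : G) (k : ℕ), HasSum (fun s : G => f s k * g (s⁻¹ * x) k) (m f g x k)) (ω : StrongDual ℂ 𝔹) (n : ℕ) :
    ‖leftTranslate m ω (aSeq G n)‖ ≤ ‖ω‖ * ((n : ℝ) + 1)⁻¹ := by
  refine opNorm_le_bound _ (by positivity) (fun b => ?_)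
  have : leftTranslate m ω (aSeq G n) b = ω (m b (aSeq G n)) := by
    simp [leftTranslate, ContinuousLinearMap.flip_apply]
  rw [this]
  calc ‖ω (m b (aSeq G n))‖ ≤ ‖ω‖ * ‖m b (aSeq G n)‖ := ω.le_opNorm _
    _ ≤ ‖ω‖ * (((n : ℝ) + 1)⁻¹ * ‖b‖) := by gcongr; exact norm_m_aSeq_le m hm b n
    _ = ‖ω‖ * ((n : ℝ) + 1)⁻¹ * ‖b‖ := by ring

end Conv

section Functionals

variable {G : Type*} [Group G]

local notation "𝔸" => lp (fun _ : ℕ => ℂ) 1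
local notation "𝔹" => lp (fun _ : G => lp (fun _ : ℕ => ℂ) 1) 1

theorem summable_lp1 (g : 𝔸) : Summable (fun k => g k) := by
  have h := (lp.memℓp g).summable (p := 1) (by norm_num)
  refine Summable.of_norm ?_
  simpa using h

theorem norm_omega_aSeq_le (ω : StrongDual ℂ 𝔹) (n : ℕ) : ‖ω (aSeq G n)‖ ≤ ‖ω‖ :=
  (ω.le_opNorm _).trans (mul_le_of_le_one_right (norm_nonneg _) (norm_aSeq_le n))

/-- the functional φ : ultrafilter limit of evaluations at `aSeq`. -/
noncomputable def phiF (G : Type*) [Group G] (U : Ultrafilter ℕ) :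
    StrongDual ℂ (StrongDual ℂ (lp (fun _ : G => lp (fun _ : ℕ => ℂ) 1) 1)) :=
  LinearMap.mkContinuous
    { toFun := fun ω => ulim U (fun n => ω (aSeq G n))
      map_add' := fun ω₁ ω₂ => by
        refine ulim_eq ?_
        have h := (ulim_tendsto (U := U) (norm_omega_aSeq_le ω₁)).add
          (ulim_tendsto (U := U) (norm_omega_aSeq_le ω₂))
        simpa using h
      map_smul' := fun c ω => by
        refine ulim_eq ?_
        have h := (ulim_tendsto (U := U) (norm_omega_aSeq_le ω)).const_mul c
        simpa using h }
    1
    (fun ω => by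
      simpa using ulim_norm_le (U := U) (norm_omega_aSeq_le ω))

theorem phiF_apply (U : Ultrafilter ℕ) (ω : StrongDual ℂ 𝔹) :
    phiF G U ω = ulim U (fun n => ω (aSeq G n)) := rfl

/-- sum functional on ℓ¹(ℕ). -/
noncomputable def sumA : StrongDual ℂ (lp (fun _ : ℕ => ℂ) 1) :=
  LinearMap.mkContinuous
    { toFun := fun g => ∑' k, g k
      map_add' := fun g h => by
        have hg := summable_lp1 g
        have hh := summable_lp1 h
        have : (fun k => (g + h : 𝔸) k) = fun k => g k + h k := by
          funext k
          rw [show ((g + h : 𝔸)) k = (⇑(g + h : 𝔸)) k from rfl, lp.coeFn_add]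
          rfl
        show (∑' k, ((g + h : 𝔸)) k) = (∑' k, g k) + ∑' k, h k
        rw [this, Summable.tsum_add hg hh]
      map_smul' := fun c g => by
        have : (fun k => (c • g : 𝔸) k) = fun k => c * g k := by
          funext k
          rw [show ((c • g : 𝔸)) k = (⇑(c • g : 𝔸)) k from rfl, lp.coeFn_smul]
          rfl
        show (∑' k, ((c • g : 𝔸)) k) = (RingHom.id ℂ) c • ∑' k, g k
        rw [this, tsum_mul_left]
        rfl }
    1
    (fun g => by
      have h1 : ‖∑' k, g k‖ ≤ ∑' k, ‖g k‖ :=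
        norm_tsum_le_tsum_norm (l1_hasSum_norm g).summable
      have h2 : ∑' k, ‖g k‖ = ‖g‖ := (l1_hasSum_norm g).tsum_eq
      show ‖∑' k, g k‖ ≤ 1 * ‖g‖
      rw [one_mul]
      exact h1.trans_eq h2)

/-- evaluation at the identity of `G`. -/
noncomputable def evC (G : Type*) [Group G] :
    lp (fun _ : G => lp (fun _ : ℕ => ℂ) 1) 1 →L[ℂ] lp (fun _ : ℕ => ℂ) 1 :=
  LinearMap.mkContinuous
    { toFun := fun f => f (1 : G)
      map_add' := fun f g => congrFun (lp.coeFn_add f g) (1 : G)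
      map_smul' := fun c f => congrFun (lp.coeFn_smul c f) (1 : G) }
    1
    (fun f => by simpa using lp.norm_apply_le_norm one_ne_zero f (1 : G))

noncomputable def omega0 (G : Type*) [Group G] :
    StrongDual ℂ (lp (fun _ : G => lp (fun _ : ℕ => ℂ) 1) 1) :=
  sumA.comp (evC G)

theorem sumA_apply (g : 𝔸) : sumA g = ∑' k, g k := rfl

theorem evC_apply (f : lp (fun _ : G => lp (fun _ : ℕ => ℂ) 1) 1) : evC G f = f 1 := rfl

theorem omega0_apply (f : lp (fun _ : G => lp (fun _ : ℕ => ℂ) 1) 1) :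
    omega0 G f = ∑' k, (f (1 : G)) k := rfl

theorem omega0_aSeq (n : ℕ) : omega0 G (aSeq G n) = 1 := by
  classical
  rw [omega0_apply]
  have h2 : (fun k => (aSeq G n (1 : G)) k)
      = fun k => if k ≤ n then ((n : ℂ) + 1)⁻¹ else 0 := by
    funext k
    rw [aSeq_apply]
    simp
  rw [h2]
  have h3 : ∑' k, (if k ≤ n then ((n : ℂ) + 1)⁻¹ else 0)
      = ∑ k ∈ Finset.range (n + 1), (if k ≤ n then ((n : ℂ) + 1)⁻¹ else 0) := by
    refine tsum_eq_sum (fun k hk => ?_)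
    have : ¬ k ≤ n := by
      intro h
      exact hk (Finset.mem_range.2 (Nat.lt_succ_of_le h))
    simp [this]
  rw [h3]
  have h4 : ∀ k ∈ Finset.range (n + 1), (if k ≤ n then ((n : ℂ) + 1)⁻¹ else 0)
      = ((n : ℂ) + 1)⁻¹ := by
    intro k hk
    have : k ≤ n := Nat.lt_succ_iff.1 (Finset.mem_range.1 hk)
    simp [this]
  rw [Finset.sum_congr rfl h4]
  simp only [Finset.sum_const, Finset.card_range, nsmul_eq_mul]
  have hc : ((n + 1 : ℕ) : ℂ) = (n : ℂ) + 1 := by push_cast; ring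
  have hne : ((n : ℂ) + 1) ≠ 0 := Nat.cast_add_one_ne_zero n
  rw [hc, mul_inv_cancel₀ hne]

end Functionals

set_option maxHeartbeats 1000000 in
set_option synthInstance.maxHeartbeats 200000 in

/-- for an infinite discrete group `G` and `ℓ¹(ℕ)` with the pointwise product,
the generalized group algebra `(ℓ¹(G, ℓ¹(ℕ)), ∗)` (convolution `m`, described coordinatewise)
is not strongly Arens irregular: its right topological centre strictly contains the canonical
image of `ℓ¹(G, ℓ¹(ℕ))` in the bidual. -/
theorem stmt3 {G : Type*} [Group G] [Infinite G]
    (m : lp (fun _ : G => lp (fun _ : ℕ => ℂ) 1) 1 →L[ℂ]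
      lp (fun _ : G => lp (fun _ : ℕ => ℂ) 1) 1 →L[ℂ]
      lp (fun _ : G => lp (fun _ : ℕ => ℂ) 1) 1)
    (hm : ∀ (f g : lp (fun _ : G => lp (fun _ : ℕ => ℂ) 1) 1) (x : G) (k : ℕ),
      HasSum (fun s : G => f s k * g (s⁻¹ * x) k) (m f g x k)) :
    Set.range (inclusionInDoubleDual ℂ (lp (fun _ : G => lp (fun _ : ℕ => ℂ) 1) 1)) ⊂
      {φ : StrongDual ℂ (StrongDual ℂ (lp (fun _ : G => lp (fun _ : ℕ => ℂ) 1) 1)) |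
        ∀ ψ : StrongDual ℂ (StrongDual ℂ (lp (fun _ : G => lp (fun _ : ℕ => ℂ) 1) 1)),
          ∀ ω : StrongDual ℂ (lp (fun _ : G => lp (fun _ : ℕ => ℂ) 1) 1),
            arensBox m ψ φ ω = arensDia m ψ φ ω} ∧
    ¬ (({φ : StrongDual ℂ (StrongDual ℂ (lp (fun _ : G => lp (fun _ : ℕ => ℂ) 1) 1)) |
          ∀ ψ : StrongDual ℂ (StrongDual ℂ (lp (fun _ : G => lp (fun _ : ℕ => ℂ) 1) 1)),
            ∀ ω : StrongDual ℂ (lp (fun _ : G => lp (fun _ : ℕ => ℂ) 1) 1),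
              arensBox m φ ψ ω = arensDia m φ ψ ω} =
          Set.range (inclusionInDoubleDual ℂ (lp (fun _ : G => lp (fun _ : ℕ => ℂ) 1) 1))) ∧
        ({φ : StrongDual ℂ (StrongDual ℂ (lp (fun _ : G => lp (fun _ : ℕ => ℂ) 1) 1)) |
          ∀ ψ : StrongDual ℂ (StrongDual ℂ (lp (fun _ : G => lp (fun _ : ℕ => ℂ) 1) 1)),
            ∀ ω : StrongDual ℂ (lp (fun _ : G => lp (fun _ : ℕ => ℂ) 1) 1),
              arensBox m ψ φ ω = arensDia m ψ φ ω} =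
          Set.range (inclusionInDoubleDual ℂ (lp (fun _ : G => lp (fun _ : ℕ => ℂ) 1) 1)))) := by
  set B := lp (fun _ : G => lp (fun _ : ℕ => ℂ) 1) 1 with hB
  set J := inclusionInDoubleDual ℂ B with hJ
  set U : Ultrafilter ℕ := Ultrafilter.of Filter.atTop with hUdef
  have hU : (U : Filter ℕ) ≤ Filter.atTop := Ultrafilter.of_le _
  set φ := phiF G U with hφdef
  -- `subL m φ ω = 0`
  have hsubL0 : ∀ ω : StrongDual ℂ B, subL m φ ω = 0 := by
    intro ω
    ext b
    rw [subL_apply, ContinuousLinearMap.zero_apply, hφdef, phiF_apply]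
    refine ulim_of_tendsto hU ?_
    have : (fun n => rightTranslate m ω b (aSeq G n)) = fun n => ω (m b (aSeq G n)) := rfl
    rw [this]
    exact tendsto_omegamb m hm b ω
  -- the Arens box product with φ on the right vanishes
  have hbox : ∀ (ψ : StrongDual ℂ (StrongDual ℂ B)) (ω : StrongDual ℂ B), arensBox m ψ φ ω = 0 := by
    intro ψ ω
    rw [arensBox, hsubL0]
    exact ψ.map_zero
  -- the Arens diamond product with φ on the right vanishes
  have hdia : ∀ (ψ : StrongDual ℂ (StrongDual ℂ B)) (ω : StrongDual ℂ B), arensDia m ψ φ ω = 0 := by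
    intro ψ ω
    rw [arensDia, hφdef, phiF_apply]
    refine ulim_of_tendsto hU ?_
    have heq : (fun n => subR m ψ ω (aSeq G n)) = fun n => ψ (leftTranslate m ω (aSeq G n)) := rfl
    rw [heq, tendsto_zero_iff_norm_tendsto_zero]
    have hb : ∀ n : ℕ, ‖ψ (leftTranslate m ω (aSeq G n))‖
        ≤ (‖ψ‖ * ‖ω‖) * (1 / ((n : ℝ) + 1)) := by
      intro n
      calc ‖ψ (leftTranslate m ω (aSeq G n))‖ ≤ ‖ψ‖ * ‖leftTranslate m ω (aSeq G n)‖ :=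
            ψ.le_opNorm _
        _ ≤ ‖ψ‖ * (‖ω‖ * ((n : ℝ) + 1)⁻¹) := by
            gcongr
            exact norm_leftTranslate_aSeq_le m hm ω n
        _ = (‖ψ‖ * ‖ω‖) * (1 / ((n : ℝ) + 1)) := by ring
    have hlim : Filter.Tendsto (fun n : ℕ => (‖ψ‖ * ‖ω‖) * (1 / ((n : ℝ) + 1)))
        Filter.atTop (nhds 0) := by
      have := tendsto_one_div_add_atTop_nhds_zero_nat.const_mul (‖ψ‖ * ‖ω‖)
      simpa using this
    exact squeeze_zero (fun n => norm_nonneg _) hb hlim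
  -- φ is in the right topological centre
  have hmem : φ ∈ {φ : StrongDual ℂ (StrongDual ℂ B) | ∀ ψ : StrongDual ℂ (StrongDual ℂ B), ∀ ω : StrongDual ℂ B,
      arensBox m ψ φ ω = arensDia m ψ φ ω} := by
    intro ψ ω
    rw [hbox ψ ω, hdia ψ ω]
  -- φ is nonzero
  have hφomega : φ (omega0 G) = 1 := by
    rw [hφdef, phiF_apply]
    refine ulim_of_tendsto hU ?_
    have : (fun n => omega0 G (aSeq G n)) = fun _ => (1 : ℂ) := by
      funext n; exact omega0_aSeq n
    rw [this]
    exact tendsto_const_nhds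
  -- φ is not in the range of J
  have hnot : φ ∉ Set.range J := by
    rintro ⟨a, ha⟩
    -- from `subL m (J a) ω = 0` we get `ω (m b a) = 0` for all `ω`, `b`
    have h1 : ∀ (b : B) (ω : StrongDual ℂ B), ω (m b a) = 0 := by
      intro b ω
      have h2 : subL m (J a) ω b = 0 := by rw [ha, hsubL0]; rfl
      rw [subL_apply] at h2
      have h3 : J a (rightTranslate m ω b) = ω (m b a) := by
        rw [hJ, dual_def]
        rfl
      rw [h3] at h2
      exact h2
    have h2 : ∀ b : B, m b a = 0 := fun b =>
      eq_zero_of_forall_dual_eq_zero ℂ (fun ω => h1 b ω)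
    -- deduce `a = 0` using the coordinate description of `m`
    have h3 : a = 0 := by
      classical
      refine lp.ext (funext (fun x => lp.ext (funext (fun k => ?_))))
      have h4 := hm (bv 1 k) a x k
      have h5 : (fun s : G => bv (1 : G) k s k * a (s⁻¹ * x) k)
          = fun s => if s = 1 then a x k else 0 := by
        funext s
        rcases eq_or_ne s 1 with rfl | hs
        · rw [if_pos rfl, bv_apply_self, eA_apply, if_pos rfl, one_mul, inv_one, one_mul]
        · rw [if_neg hs, bv_apply_ne _ _ hs]
          simp
      rw [h5] at h4
      have h6 := h4.unique (hasSum_ite_eq (1 : G) (a x k))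
      have h7 : m (bv 1 k) a = 0 := h2 (bv 1 k)
      have h8 : m (bv 1 k) a x k = 0 := by
        rw [h7]
        have hz1 : (0 : lp (fun _ : G => lp (fun _ : ℕ => ℂ) 1) 1) x = 0 :=
          congrFun (lp.coeFn_zero _ _) x
        rw [hz1]
        exact congrFun (lp.coeFn_zero _ _) k
      rw [h8] at h6
      simpa using h6.symm
    rw [h3, map_zero] at ha
    rw [← ha] at hφomega
    simpa using hφomega
  -- the range of J is contained in the right topological centre
  have hsub : Set.range J ⊆ {φ : StrongDual ℂ (StrongDual ℂ B) | ∀ ψ : StrongDual ℂ (StrongDual ℂ B), ∀ ω : StrongDual ℂ B,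
      arensBox m ψ φ ω = arensDia m ψ φ ω} := by
    rintro _ ⟨a, rfl⟩ ψ ω
    have h1 : subL m (J a) ω = leftTranslate m ω a := by
      ext b
      rw [subL_apply, hJ, dual_def]
      rfl
    have h2 : arensBox m ψ (J a) ω = ψ (leftTranslate m ω a) := by
      rw [arensBox, h1]
    have h3 : arensDia m ψ (J a) ω = ψ (leftTranslate m ω a) := by
      rw [arensDia, hJ, dual_def, subR_apply]
    rw [h2, h3]
  have hss : Set.range J ⊂ {φ : StrongDual ℂ (StrongDual ℂ B) | ∀ ψ : StrongDual ℂ (StrongDual ℂ B), ∀ ω : StrongDual ℂ B,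
      arensBox m ψ φ ω = arensDia m ψ φ ω} :=
    ⟨hsub, fun h => hnot (h hmem)⟩
  exact ⟨hss, fun h => hnot (h.2 ▸ hmem)⟩
end

section
/- Let G be an infinite discrete group, X = (ℓ¹(G), ∗) the convolution group algebra, and give ℓ¹(ℕ, X) the coordinatewise product (h • g)(n) = h(n) ∗ g(n). Let θ : ℓ∞(ℕ, X*) → ℓ¹(ℕ, X)* be the canonical isometric duality θ(f)(g) = Σₙ ⟨f(n), g(n)⟩. Then for every ω ∈ ℓ¹(ℕ, X)* and every h ∈ ℓ¹(ℕ, X), both translated functionals ω_h (defined by ω_h(g) = ω(h • g)) and _hω (defined by _hω(g) = ω(g • h)) belong to θ(c₀(ℕ, X*)). -/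
open NormedSpace
open scoped ENNReal
set_option maxHeartbeats 1000000
set_option synthInstance.maxHeartbeats 1000000
set_option linter.unnecessarySimpa false
set_option linter.unusedVariables false

section Aux

variable {X : Type*} [NormedAddCommGroup X] [NormedSpace ℂ X]

/-- The coordinate embedding `X →L[ℂ] ℓ¹(ℕ, X)`. -/
noncomputable def lpSingleCLM (n : ℕ) : X →L[ℂ] lp (fun _ : ℕ => X) 1 :=
  LinearMap.mkContinuous
    { toFun := fun x => lp.single 1 n x
      map_add' := by
        intro x y
        apply lp.ext
        funext j
        by_cases hj : j = n
        · subst hj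
          simp [lp.single_apply_self]
        · simp [lp.single_apply_ne _ _ _ hj]
      map_smul' := fun c x => by simpa using lp.single_smul 1 n c x }
    1 (fun x => by
      rw [one_mul]
      exact le_of_eq (lp.norm_single (E := fun _ : ℕ => X) (p := 1) (by norm_num) n x))

theorem lpSingleCLM_apply (n : ℕ) (x : X) : lpSingleCLM n x = lp.single 1 n x := rfl

end Aux

/-- let `X = (ℓ¹(G), ∗)` (convolution `m`), give `B = ℓ¹(ℕ, X)` the
coordinatewise product `M`, and let `θ : ℓ∞(ℕ, X*) → ℓ¹(ℕ, X)*` be the canonical isometric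
duality `θ(f)(g) = Σₙ ⟨f(n), g(n)⟩`.  Then for every `ω ∈ ℓ¹(ℕ, X)*` and `h ∈ ℓ¹(ℕ, X)`,
both translates `ω_h : g ↦ ω(h • g)` and `_hω : g ↦ ω(g • h)` lie in `θ(c₀(ℕ, X*))`. -/
theorem stmt6 {G : Type*} [Group G] [Infinite G]
    (m : lp (fun _ : G => ℂ) 1 →L[ℂ] lp (fun _ : G => ℂ) 1 →L[ℂ] lp (fun _ : G => ℂ) 1)
    (hm : ∀ (f g : lp (fun _ : G => ℂ) 1) (x : G),
      HasSum (fun s : G => f s * g (s⁻¹ * x)) (m f g x))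
    (M : lp (fun _ : ℕ => lp (fun _ : G => ℂ) 1) 1 →L[ℂ]
      lp (fun _ : ℕ => lp (fun _ : G => ℂ) 1) 1 →L[ℂ]
      lp (fun _ : ℕ => lp (fun _ : G => ℂ) 1) 1)
    (hM : ∀ (h g : lp (fun _ : ℕ => lp (fun _ : G => ℂ) 1) 1) (n : ℕ),
      M h g n = m (h n) (g n))
    (θ : lp (fun _ : ℕ => StrongDual ℂ (lp (fun _ : G => ℂ) 1)) ∞ ≃ₗᵢ[ℂ]
      StrongDual ℂ (lp (fun _ : ℕ => lp (fun _ : G => ℂ) 1) 1))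
    (hθ : ∀ (f : lp (fun _ : ℕ => StrongDual ℂ (lp (fun _ : G => ℂ) 1)) ∞)
        (g : lp (fun _ : ℕ => lp (fun _ : G => ℂ) 1) 1),
      HasSum (fun n : ℕ => f n (g n)) (θ f g)) :
    ∀ (ω : StrongDual ℂ (lp (fun _ : ℕ => lp (fun _ : G => ℂ) 1) 1))
      (h : lp (fun _ : ℕ => lp (fun _ : G => ℂ) 1) 1),
      (∃ f : lp (fun _ : ℕ => StrongDual ℂ (lp (fun _ : G => ℂ) 1)) ∞,
        Filter.Tendsto (fun n : ℕ => ‖f n‖) Filter.atTop (nhds 0) ∧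
        θ f = ω.comp (M h)) ∧
      (∃ f : lp (fun _ : ℕ => StrongDual ℂ (lp (fun _ : G => ℂ) 1)) ∞,
        Filter.Tendsto (fun n : ℕ => ‖f n‖) Filter.atTop (nhds 0) ∧
        θ f = ω.comp (M.flip h)) := by
  intro ω h
  -- the norms of `h n` tend to zero
  have hnorm : Filter.Tendsto (fun n : ℕ => ‖h n‖) Filter.atTop (nhds 0) := by
    have hs : Summable (fun n : ℕ => ‖h n‖) := by
      have := lp.hasSum_norm (p := 1) (by norm_num) h
      simpa using this.summable
    exact hs.tendsto_atTop_zero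
  -- key general lemma
  have key : ∀ (T : ℕ → (lp (fun _ : G => ℂ) 1 →L[ℂ] lp (fun _ : G => ℂ) 1)),
      Filter.Tendsto (fun n => ‖T n‖) Filter.atTop (nhds 0) →
      ∀ (Φ : lp (fun _ : ℕ => lp (fun _ : G => ℂ) 1) 1 →L[ℂ] lp (fun _ : ℕ => lp (fun _ : G => ℂ) 1) 1),
      (∀ (g : lp (fun _ : ℕ => lp (fun _ : G => ℂ) 1) 1) (n : ℕ), Φ g n = T n (g n)) →
      ∃ f : lp (fun _ : ℕ => StrongDual ℂ (lp (fun _ : G => ℂ) 1)) ∞,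
        Filter.Tendsto (fun n : ℕ => ‖f n‖) Filter.atTop (nhds 0) ∧
        θ f = ω.comp Φ := by
    intro T hT Φ hΦ
    set F : ℕ → StrongDual ℂ (lp (fun _ : G => ℂ) 1) := fun n => ω.comp ((lpSingleCLM n).comp (T n)) with hF
    have hbound : ∀ n, ‖F n‖ ≤ ‖ω‖ * ‖T n‖ := by
      intro n
      refine ContinuousLinearMap.opNorm_le_bound _
        (mul_nonneg (norm_nonneg _) (norm_nonneg _)) (fun x => ?_)
      calc ‖F n x‖ ≤ ‖ω‖ * ‖lpSingleCLM n (T n x)‖ := ω.le_opNorm _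
        _ = ‖ω‖ * ‖T n x‖ := by
            rw [lpSingleCLM_apply, lp.norm_single (E := fun _ : ℕ => lp (fun _ : G => ℂ) 1) (p := 1) (by norm_num) n (T n x)]
        _ ≤ ‖ω‖ * (‖T n‖ * ‖x‖) :=
            mul_le_mul_of_nonneg_left ((T n).le_opNorm x) (norm_nonneg _)
        _ = ‖ω‖ * ‖T n‖ * ‖x‖ := by ring
    have htend : Filter.Tendsto (fun n => ‖F n‖) Filter.atTop (nhds 0) := by
      have h2 : Filter.Tendsto (fun n => ‖ω‖ * ‖T n‖) Filter.atTop (nhds 0) := by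
        simpa using hT.const_mul ‖ω‖
      exact squeeze_zero (fun n => norm_nonneg _) hbound h2
    have hmem : Memℓp F ∞ := memℓp_infty htend.bddAbove_range
    refine ⟨⟨F, hmem⟩, htend, ?_⟩
    apply ContinuousLinearMap.ext
    intro g
    have h1 : HasSum (fun n : ℕ => F n (g n)) (θ ⟨F, hmem⟩ g) := hθ ⟨F, hmem⟩ g
    have h2 : HasSum (fun n : ℕ => lp.single 1 n (Φ g n)) (Φ g) :=
      lp.hasSum_single (by norm_num) (Φ g)
    have h3 : HasSum (fun n : ℕ => ω (lp.single 1 n (Φ g n))) (ω (Φ g)) :=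
      ω.hasSum h2
    have h4 : (fun n : ℕ => F n (g n)) = fun n : ℕ => ω (lp.single 1 n (Φ g n)) := by
      funext n
      simp only [hF, ContinuousLinearMap.comp_apply, lpSingleCLM_apply, hΦ g n]
    rw [h4] at h1
    exact h1.unique h3
  constructor
  · refine key (fun n => m (h n)) ?_ (M h) (fun g n => hM h g n)
    have hb : ∀ n, ‖m (h n)‖ ≤ ‖m‖ * ‖h n‖ := fun n => m.le_opNorm _
    have h2 : Filter.Tendsto (fun n => ‖m‖ * ‖h n‖) Filter.atTop (nhds 0) := by
      simpa using hnorm.const_mul ‖m‖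
    exact squeeze_zero (fun n => norm_nonneg _) hb h2
  · refine key (fun n => m.flip (h n)) ?_ (M.flip h) (fun g n => ?_)
    · have hb : ∀ n, ‖m.flip (h n)‖ ≤ ‖m.flip‖ * ‖h n‖ := fun n => m.flip.le_opNorm _
      have h2 : Filter.Tendsto (fun n => ‖m.flip‖ * ‖h n‖) Filter.atTop (nhds 0) := by
        simpa using hnorm.const_mul ‖m.flip‖
      exact squeeze_zero (fun n => norm_nonneg _) hb h2
    · simpa using hM g h n
end

section
/- Let G be an infinite discrete group and A a Banach algebra for which there is an algebra isomorphism ρ from (ℓ¹(ℕ), •) (pointwise product) onto a closed complemented subspace ρ(ℓ¹(ℕ)) of A. Let X = ℓ¹(G, A), fix pairwise distinct elements {hₙ}_{n∈ℕ} ⊆ G, and let 𝒰 be a non-principal ultrafilter on ℕ. Then the map φ_𝒰 : X* → ℂ defined by φ_𝒰(τ) = lim_𝒰 τ(δ_{hₙ} ⊗ ρ(eₙ)) is a well-defined, nonzero, bounded linear functional on X*, i.e. φ_𝒰 ∈ X**, and φ_𝒰 does not belong to the canonical image J(X) of X in X**. -/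
open NormedSpace ContinuousLinearMap
set_option linter.unusedSectionVars false

section aux
variable {ι : Type*} {E : Type*} [NormedAddCommGroup E] [NormedSpace ℂ E] [CompleteSpace E]

theorem aux_hasSum_norm (f : lp (fun _ : ι => E) 1) : HasSum (fun i => ‖f i‖) ‖f‖ := by
  have := lp.hasSum_norm (E := fun _ : ι => E) (p := 1) (by norm_num) f
  simpa using this

theorem aux_summable (f : lp (fun _ : ι => E) 1) : Summable (fun i => f i) :=
  Summable.of_norm (aux_hasSum_norm f).summable

noncomputable def l1sum : lp (fun _ : ι => E) 1 →L[ℂ] E :=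
  LinearMap.mkContinuous
    { toFun := fun f => ∑' i, f i
      map_add' := fun f g => by
        rw [← Summable.tsum_add (aux_summable f) (aux_summable g)]
        exact tsum_congr fun i => by rw [lp.coeFn_add]; rfl
      map_smul' := fun c f => by
        simp only [RingHom.id_apply]
        rw [← Summable.tsum_const_smul c (aux_summable f)]
        exact tsum_congr fun i => by rw [lp.coeFn_smul]; rfl }
    1 (fun f => by
      simpa [(aux_hasSum_norm f).tsum_eq] using
        norm_tsum_le_tsum_norm (f := fun i => f i) (aux_hasSum_norm f).summable)

theorem l1sum_apply (f : lp (fun _ : ι => E) 1) : l1sum f = ∑' i, f i := rfl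

theorem l1sum_single [DecidableEq ι] (i : ι) (a : E) : l1sum (lp.single 1 i a) = a := by
  rw [l1sum_apply]
  have hs : HasSum (fun j => (lp.single 1 i a : lp (fun _ : ι => E) 1) j)
      ((lp.single 1 i a : lp (fun _ : ι => E) 1) i) :=
    hasSum_single i (fun j hj => lp.single_apply_ne (E := fun _ : ι => E) 1 i a hj)
  rw [hs.tsum_eq, lp.single_apply_self]

noncomputable def evalCLM (g : ι) : lp (fun _ : ι => E) 1 →L[ℂ] E :=
  LinearMap.mkContinuous
    { toFun := fun f => f g
      map_add' := fun f f' => congrFun (lp.coeFn_add f f') g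
      map_smul' := fun c f => congrFun (lp.coeFn_smul c f) g }
    1 (fun f => by simpa using lp.norm_apply_le_norm one_ne_zero f g)

theorem evalCLM_apply (g : ι) (f : lp (fun _ : ι => E) 1) : evalCLM g f = f g := rfl

end aux

theorem exists_psi {A : Type*} [NonUnitalNormedRing A] [NormedSpace ℂ A]
    [IsScalarTower ℂ A A] [SMulCommClass ℂ A A] [CompleteSpace A]
    (ρ : lp (fun _ : ℕ => ℂ) 1 →L[ℂ] A)
    (hρ_inj : Function.Injective ρ)
    (hρ_closed : IsClosed (Set.range ρ))
    (hρ_compl : ∃ C : Submodule ℂ A, IsClosed (C : Set A) ∧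
      (∀ a : A, ∃ b ∈ LinearMap.range (ρ : lp (fun _ : ℕ => ℂ) 1 →ₗ[ℂ] A), ∃ c ∈ C, a = b + c) ∧
      (∀ b ∈ LinearMap.range (ρ : lp (fun _ : ℕ => ℂ) 1 →ₗ[ℂ] A), ∀ c ∈ C, ‖b + c‖ = ‖b‖ + ‖c‖)) :
    ∃ ψ : A →L[ℂ] ℂ, ∀ n : ℕ, ψ (ρ (lp.single 1 n 1)) = 1 := by
  obtain ⟨C, _hC, hdecomp, hsum⟩ := hρ_compl
  set R : Submodule ℂ A := LinearMap.range (ρ : lp (fun _ : ℕ => ℂ) 1 →ₗ[ℂ] A) with hR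
  -- uniqueness of decompositions
  have huniq : ∀ b ∈ R, ∀ c ∈ C, ∀ b' ∈ R, ∀ c' ∈ C, b + c = b' + c' → b = b' := by
    intro b hb c hc b' hb' c' hc' heq
    have h1 : ‖(b - b') + (c - c')‖ = ‖b - b'‖ + ‖c - c'‖ :=
      hsum _ (R.sub_mem hb hb') _ (C.sub_mem hc hc')
    have h2 : (b - b') + (c - c') = 0 := by
      rw [sub_add_sub_comm, heq, sub_self]
    rw [h2, norm_zero] at h1
    have hb0 : ‖b - b'‖ = 0 := by
      have := norm_nonneg (b - b'); have := norm_nonneg (c - c'); linarith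
    rw [norm_eq_zero, sub_eq_zero] at hb0
    exact hb0
  choose P Pmem Q Qmem PQeq using hdecomp
  have Pid : ∀ b ∈ R, P b = b := fun b hb =>
    huniq _ (Pmem b) _ (Qmem b) b hb 0 C.zero_mem (by rw [add_zero, ← PQeq b])
  have Padd : ∀ a a', P (a + a') = P a + P a' := by
    intro a a'
    exact huniq _ (Pmem (a + a')) _ (Qmem (a + a')) _ (R.add_mem (Pmem a) (Pmem a'))
      _ (C.add_mem (Qmem a) (Qmem a'))
      (by rw [← PQeq (a + a'),
        show P a + P a' + (Q a + Q a') = (P a + Q a) + (P a' + Q a') from by abel,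
        ← PQeq a, ← PQeq a'])
  have Psmul : ∀ (r : ℂ) a, P (r • a) = r • P a := by
    intro r a
    exact huniq _ (Pmem (r • a)) _ (Qmem (r • a)) _ (R.smul_mem r (Pmem a))
      _ (C.smul_mem r (Qmem a))
      (by rw [← PQeq (r • a), ← smul_add, ← PQeq a])
  have Pnorm : ∀ a, ‖P a‖ ≤ ‖a‖ := by
    intro a
    have := hsum _ (Pmem a) _ (Qmem a)
    rw [← PQeq a] at this
    have := norm_nonneg (Q a)
    linarith [hsum _ (Pmem a) _ (Qmem a), norm_nonneg (Q a)]
  let Plin : A →ₗ[ℂ] A := { toFun := P, map_add' := Padd, map_smul' := Psmul }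
  let Pcont : A →L[ℂ] A := LinearMap.mkContinuous Plin 1 (fun a => by rw [one_mul]; exact Pnorm a)
  have hRc : (R : Set A) = Set.range ρ := by
    ext a; simp [hR, LinearMap.mem_range, Set.mem_range]
  haveI : CompleteSpace R := (hRc ▸ hρ_closed).completeSpace_coe
  let Pr : A →L[ℂ] R := Pcont.codRestrict R (fun a => Pmem a)
  let ρR : lp (fun _ : ℕ => ℂ) 1 →L[ℂ] R :=
    ρ.codRestrict R (fun x => LinearMap.mem_range_self _ x)
  have hker : LinearMap.ker (ρR : lp (fun _ : ℕ => ℂ) 1 →ₗ[ℂ] R) = ⊥ :=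
    by
      have hinj : Function.Injective ρR := fun x y hxy => hρ_inj (congrArg Subtype.val hxy)
      exact LinearMap.ker_eq_bot_of_injective (f := (ρR : lp (fun _ : ℕ => ℂ) 1 →ₗ[ℂ] R)) hinj
  have hrange : LinearMap.range (ρR : lp (fun _ : ℕ => ℂ) 1 →ₗ[ℂ] R) = ⊤ :=
    LinearMap.range_eq_top.mpr (by rintro ⟨a, y, hy⟩; exact ⟨y, Subtype.ext hy⟩)
  let e := ContinuousLinearEquiv.ofBijective ρR hker hrange
  refine ⟨(l1sum (ι := ℕ) (E := ℂ)).comp ((e.symm : R →L[ℂ] lp (fun _ : ℕ => ℂ) 1).comp Pr), ?_⟩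
  intro n
  have h1 : Pr (ρ (lp.single 1 n 1)) = ρR (lp.single 1 n 1) := by
    apply Subtype.ext
    exact Pid _ (LinearMap.mem_range_self _ (lp.single 1 n 1))
  have h2 : ρR (lp.single 1 n 1) = e (lp.single 1 n 1) := rfl
  simp only [ContinuousLinearMap.comp_apply, ContinuousLinearEquiv.coe_coe, h1, h2,
    ContinuousLinearEquiv.symm_apply_apply]
  simpa using l1sum_single (E := ℂ) n 1

/-- for a Banach algebra `A` containing a complemented algebraic copy of
`(ℓ¹(ℕ), •)` via `ρ`, pairwise distinct `{hₙ} ⊆ G` and a non-principal ultrafilter `𝒰`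
on `ℕ`, the functional `φ_𝒰(τ) = lim_𝒰 τ(δ_{hₙ} ⊗ ρ(eₙ))` is a well-defined, nonzero,
bounded linear functional on `X* = ℓ¹(G, A)*`, which does not lie in the canonical image
`J(X)` of `X = ℓ¹(G, A)` in its bidual. -/
theorem stmt8 {G : Type*} [Group G] [Infinite G] [DecidableEq G]
    {A : Type*} [NonUnitalNormedRing A] [NormedSpace ℂ A]
    [IsScalarTower ℂ A A] [SMulCommClass ℂ A A] [CompleteSpace A]
    (ρ : lp (fun _ : ℕ => ℂ) 1 →L[ℂ] A)
    (hρ_inj : Function.Injective ρ)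
    (hρ_mul : ∀ a b ab : lp (fun _ : ℕ => ℂ) 1, (∀ k, ab k = a k * b k) → ρ ab = ρ a * ρ b)
    (hρ_closed : IsClosed (Set.range ρ))
    (hρ_compl : ∃ C : Submodule ℂ A, IsClosed (C : Set A) ∧
      (∀ a : A, ∃ b ∈ LinearMap.range (ρ : lp (fun _ : ℕ => ℂ) 1 →ₗ[ℂ] A), ∃ c ∈ C, a = b + c) ∧
      (∀ b ∈ LinearMap.range (ρ : lp (fun _ : ℕ => ℂ) 1 →ₗ[ℂ] A), ∀ c ∈ C, ‖b + c‖ = ‖b‖ + ‖c‖))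
    (h : ℕ → G) (h_inj : Function.Injective h)
    (𝒰 : Ultrafilter ℕ) (h𝒰 : ∀ n : ℕ, (𝒰 : Filter ℕ) ≠ pure n) :
    ∃ φ : StrongDual ℂ (StrongDual ℂ (lp (fun _ : G => A) 1)),
      (∀ τ : StrongDual ℂ (lp (fun _ : G => A) 1),
        Filter.Tendsto (fun n => τ (lp.single 1 (h n) (ρ (lp.single 1 n 1)))) (𝒰 : Filter ℕ)
          (nhds (φ τ))) ∧
      φ ≠ 0 ∧
      φ ∉ Set.range (inclusionInDoubleDual ℂ (lp (fun _ : G => A) 1)) := by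
  classical
  set X := lp (fun _ : G => A) 1 with hX
  set xs : ℕ → X := fun n => lp.single 1 (h n) (ρ (lp.single 1 n 1)) with hxs
  have hb : ∀ n, ‖xs n‖ ≤ ‖ρ‖ := by
    intro n
    have h1 : ‖xs n‖ = ‖ρ (lp.single 1 n 1)‖ := by
      exact lp.norm_single (E := fun _ : G => A) (p := 1) (by norm_num)
        (h n) (ρ (lp.single 1 n 1))
    have h2 : ‖(lp.single 1 n 1 : lp (fun _ : ℕ => ℂ) 1)‖ = 1 := by
      simpa using lp.norm_single (E := fun _ : ℕ => ℂ) (p := 1) (by norm_num)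
        n (1 : ℂ)
    calc ‖xs n‖ = ‖ρ (lp.single 1 n 1)‖ := h1
      _ ≤ ‖ρ‖ * ‖(lp.single 1 n 1 : lp (fun _ : ℕ => ℂ) 1)‖ := ρ.le_opNorm _
      _ = ‖ρ‖ := by rw [h2, mul_one]
  -- existence of ultrafilter limits
  have hex : ∀ τ : StrongDual ℂ X, ∃ a : ℂ,
      Filter.Tendsto (fun n => τ (xs n)) (𝒰 : Filter ℕ) (nhds a) := by
    intro τ
    have hτb : ∀ n, τ (xs n) ∈ Metric.closedBall (0 : ℂ) (‖τ‖ * ‖ρ‖) := by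
      intro n
      rw [Metric.mem_closedBall, dist_zero_right]
      calc ‖τ (xs n)‖ ≤ ‖τ‖ * ‖xs n‖ := τ.le_opNorm _
        _ ≤ ‖τ‖ * ‖ρ‖ := mul_le_mul_of_nonneg_left (hb n) (norm_nonneg τ)
    obtain ⟨a, -, ha⟩ := (isCompact_closedBall (0 : ℂ) (‖τ‖ * ‖ρ‖)).ultrafilter_le_nhds
      (𝒰.map (fun n => τ (xs n)))
      (Filter.le_principal_iff.mpr (Filter.mem_map.mpr (Filter.univ_mem' hτb)))
    rw [Ultrafilter.coe_map] at ha
    exact ⟨a, ha⟩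
  choose L hL using hex
  have hLadd : ∀ τ σ, L (τ + σ) = L τ + L σ := by
    intro τ σ
    refine tendsto_nhds_unique (hL (τ + σ)) ?_
    simpa only [ContinuousLinearMap.add_apply] using (hL τ).add (hL σ)
  have hLsmul : ∀ (c : ℂ) τ, L (c • τ) = c • L τ := by
    intro c τ
    refine tendsto_nhds_unique (hL (c • τ)) ?_
    simpa only [ContinuousLinearMap.smul_apply] using (hL τ).const_smul c
  have hLnorm : ∀ τ, ‖L τ‖ ≤ ‖ρ‖ * ‖τ‖ := by
    intro τ
    refine le_of_tendsto (hL τ).norm (Filter.Eventually.of_forall fun n => ?_)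
    calc ‖τ (xs n)‖ ≤ ‖τ‖ * ‖xs n‖ := τ.le_opNorm _
      _ ≤ ‖τ‖ * ‖ρ‖ := mul_le_mul_of_nonneg_left (hb n) (norm_nonneg τ)
      _ = ‖ρ‖ * ‖τ‖ := mul_comm _ _
  let φ : StrongDual ℂ (StrongDual ℂ X) :=
    LinearMap.mkContinuous { toFun := L, map_add' := hLadd, map_smul' := hLsmul } ‖ρ‖ hLnorm
  have hφ : ∀ τ : StrongDual ℂ X,
      Filter.Tendsto (fun n => τ (xs n)) (𝒰 : Filter ℕ) (nhds (φ τ)) := hL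
  -- the test functional τ₀
  obtain ⟨ψ, hψ⟩ := exists_psi ρ hρ_inj hρ_closed hρ_compl
  let τ₀ : StrongDual ℂ X := ψ.comp (l1sum (ι := G) (E := A))
  have hτ₀ : ∀ n, τ₀ (xs n) = 1 := by
    intro n
    show ψ (l1sum (xs n)) = 1
    rw [hxs]
    simp only [l1sum_single]
    exact hψ n
  have hφτ₀ : φ τ₀ = 1 :=
    tendsto_nhds_unique (hφ τ₀) (by simpa only [hτ₀] using (tendsto_const_nhds : Filter.Tendsto
      (fun _ : ℕ => (1 : ℂ)) (𝒰 : Filter ℕ) (nhds 1)))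
  have hφne : φ ≠ 0 := fun h0 => by
    rw [h0] at hφτ₀
    simp at hφτ₀
  refine ⟨φ, hφ, hφne, ?_⟩
  rintro ⟨x, hx⟩
  -- show x = 0, contradicting φ ≠ 0
  have hx0 : x = 0 := by
    apply lp.ext
    funext g
    rw [lp.coeFn_zero, Pi.zero_apply]
    apply eq_zero_of_forall_dual_eq_zero ℂ
    intro θ
    let τ : StrongDual ℂ X := θ.comp (evalCLM (ι := G) (E := A) g)
    have hmem : {n | h n ≠ g} ∈ (𝒰 : Filter ℕ) := by
      rw [show {n | h n ≠ g} = {n | h n = g}ᶜ from rfl]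
      rw [Ultrafilter.mem_coe, Ultrafilter.compl_mem_iff_notMem]
      intro hmem'
      have hfin : ({n | h n = g} : Set ℕ).Finite := by
        apply Set.Subsingleton.finite
        intro m hm m' hm'
        exact h_inj (hm.trans hm'.symm)
      obtain ⟨m, -, hU⟩ := Ultrafilter.eq_pure_of_finite_mem hfin hmem'
      exact h𝒰 m (by rw [hU]; rfl)
    have h2 : Filter.Tendsto (fun n => τ (xs n)) (𝒰 : Filter ℕ) (nhds 0) := by
      apply Filter.Tendsto.congr' _ tendsto_const_nhds
      filter_upwards [hmem] with n hn
      show (0 : ℂ) = θ ((xs n : ∀ _ : G, A) g)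
      rw [hxs]
      have : (lp.single 1 (h n) (ρ (lp.single 1 n 1)) : X) g = 0 :=
        lp.single_apply_ne (E := fun _ : G => A) 1 (h n) _ (fun hgh => hn hgh.symm)
      rw [this, map_zero]
    have h1 : φ τ = θ (x g) := by
      rw [← hx]
      rfl
    rw [← h1, tendsto_nhds_unique (hφ τ) h2]
  rw [hx0, map_zero] at hx
  exact hφne hx.symm
end

section
/- Let G be an infinite discrete group, A a Banach algebra, ρ : (ℓ¹(ℕ), •) → A an algebra isomorphism onto a closed complemented subspace of A, and {hᵢ}_{i∈ℕ} pairwise distinct elements of G. For each i let Eᵢ* ∈ A* be a Hahn–Banach extension of the coordinate functional on ρ(ℓ¹(ℕ)) given by ρ({xⱼ}ⱼ) ↦ xᵢ. Then the map η : ℓ¹(G) → A* defined by η(Σ_{g∈G} α_g δ_g) = Σ_{i=1}^∞ α_{hᵢ} Eᵢ* is a well-defined bounded linear operator with ‖η‖ ≤ sup_i ‖Eᵢ*‖, and the corresponding functional τ = θ(η) ∈ (ℓ¹(G) ⊗̂ A)* satisfies τ(δ_{hₙ} ⊗ ρ(eₙ)) = 1 for every n ∈ ℕ. -/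
set_option maxHeartbeats 1000000

open NormedSpace ContinuousLinearMap

/-- with `ρ : (ℓ¹(ℕ), •) → A` an algebra isomorphism onto a closed complemented
subspace, pairwise distinct `{hᵢ} ⊆ G`, and `Eᵢ* ∈ A*` Hahn–Banach extensions of the coordinate
functionals `ρ({xⱼ}ⱼ) ↦ xᵢ` on `ρ(ℓ¹(ℕ))`, the map `η : ℓ¹(G) → A*`,
`η(Σ α_g δ_g) = Σᵢ α_{hᵢ} Eᵢ*`, is a well-defined bounded linear operator with
`‖η‖ ≤ supᵢ ‖Eᵢ*‖`, and `τ = θ(η) ∈ (ℓ¹(G) ⊗̂ A)* = ℓ¹(G, A)*` satisfies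
`τ(δ_{hₙ} ⊗ ρ(eₙ)) = 1` for every `n`. -/
theorem stmt10 {G : Type*} [Group G] [Infinite G] [DecidableEq G]
    {A : Type*} [NonUnitalNormedRing A] [NormedSpace ℂ A]
    [IsScalarTower ℂ A A] [SMulCommClass ℂ A A] [CompleteSpace A]
    (ρ : lp (fun _ : ℕ => ℂ) 1 →L[ℂ] A)
    (hρ_inj : Function.Injective ρ)
    (hρ_mul : ∀ a b ab : lp (fun _ : ℕ => ℂ) 1, (∀ k, ab k = a k * b k) → ρ ab = ρ a * ρ b)
    (hρ_closed : IsClosed (Set.range ρ))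
    (hρ_compl : ∃ C : Submodule ℂ A, IsClosed (C : Set A) ∧
      (∀ a : A, ∃ b ∈ LinearMap.range (ρ : lp (fun _ : ℕ => ℂ) 1 →ₗ[ℂ] A), ∃ c ∈ C, a = b + c) ∧
      (∀ b ∈ LinearMap.range (ρ : lp (fun _ : ℕ => ℂ) 1 →ₗ[ℂ] A), ∀ c ∈ C, ‖b + c‖ = ‖b‖ + ‖c‖))
    (h : ℕ → G) (h_inj : Function.Injective h)
    (E : ℕ → StrongDual ℂ A)
    (hE_ext : ∀ (i : ℕ) (x : lp (fun _ : ℕ => ℂ) 1), E i (ρ x) = x i)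
    (hE_min : ∀ (i : ℕ) (F : StrongDual ℂ A), (∀ x : lp (fun _ : ℕ => ℂ) 1, F (ρ x) = x i) →
      ‖E i‖ ≤ ‖F‖) :
    ∃ η : lp (fun _ : G => ℂ) 1 →L[ℂ] StrongDual ℂ A,
      (∀ α : lp (fun _ : G => ℂ) 1, HasSum (fun i : ℕ => α (h i) • E i) (η α)) ∧
      ‖η‖ ≤ ⨆ i : ℕ, ‖E i‖ ∧
      ∃ τ : StrongDual ℂ (lp (fun _ : G => A) 1),
        (∀ (g : G) (a : A), τ (lp.single 1 g a) = η (lp.single 1 g 1) a) ∧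
        ∀ n : ℕ, τ (lp.single 1 (h n) (ρ (lp.single 1 n 1))) = 1 := by
  classical
  -- STEP A: uniform bound on ‖E i‖
  have hM : ∃ M : ℝ, 0 ≤ M ∧ ∀ i, ‖E i‖ ≤ M := by
    obtain ⟨C, hC_closed, hC_decomp, hC_norm⟩ := hρ_compl
    set R : Submodule ℂ A := LinearMap.range (ρ : lp (fun _ : ℕ => ℂ) 1 →ₗ[ℂ] A) with hR
    have hRset : (R : Set A) = Set.range ρ := by
      ext a; simp [hR, LinearMap.mem_range, Set.mem_range]
    have hRclosed : IsClosed (R : Set A) := hRset ▸ hρ_closed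
    haveI : CompleteSpace R := hRclosed.completeSpace_coe
    set ρ' : lp (fun _ : ℕ => ℂ) 1 →L[ℂ] R :=
      ρ.codRestrict R (fun x => LinearMap.mem_range_self _ x) with hρ'
    have hker : LinearMap.ker (ρ' : lp (fun _ : ℕ => ℂ) 1 →ₗ[ℂ] R) = ⊥ := by
      rw [LinearMap.ker_eq_bot']
      intro m hm
      have : ρ m = 0 := congrArg Subtype.val hm
      exact hρ_inj (by rw [this, map_zero])
    have hrange : LinearMap.range (ρ' : lp (fun _ : ℕ => ℂ) 1 →ₗ[ℂ] R) = ⊤ := by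
      rw [LinearMap.range_eq_top]
      rintro ⟨a, ha⟩
      obtain ⟨x, hx⟩ := ha
      exact ⟨x, Subtype.ext hx⟩
    set e := ContinuousLinearEquiv.ofBijective ρ' hker hrange with he
    set σ : R →L[ℂ] lp (fun _ : ℕ => ℂ) 1 := (e.symm : R →L[ℂ] lp (fun _ : ℕ => ℂ) 1) with hσ
    choose b hbR c hcC hbc using hC_decomp
    have huniq : ∀ b₁ ∈ R, ∀ b₂ ∈ R, ∀ c₁ ∈ C, ∀ c₂ ∈ C, b₁ + c₁ = b₂ + c₂ → b₁ = b₂ := by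
      intro b₁ hb₁ b₂ hb₂ c₁ hc₁ c₂ hc₂ heq
      have hz : (b₁ - b₂) + (c₁ - c₂) = 0 := by
        rw [sub_add_sub_comm, heq, sub_self]
      have hn := hC_norm (b₁ - b₂) (sub_mem hb₁ hb₂) (c₁ - c₂) (sub_mem hc₁ hc₂)
      rw [hz, norm_zero] at hn
      have h1 : ‖b₁ - b₂‖ = 0 := by
        linarith [norm_nonneg (b₁ - b₂), norm_nonneg (c₁ - c₂)]
      rw [← sub_eq_zero]
      exact norm_eq_zero.mp h1
    have hb_eqρ : ∀ x : lp (fun _ : ℕ => ℂ) 1, b (ρ x) = ρ x := by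
      intro x
      refine huniq (b (ρ x)) (hbR _) (ρ x) ⟨x, rfl⟩ (c (ρ x)) (hcC _) 0 (zero_mem C) ?_
      rw [add_zero, ← hbc]
    have hb_add : ∀ a a' : A, b (a + a') = b a + b a' := by
      intro a a'
      refine huniq (b (a + a')) (hbR _) (b a + b a') (add_mem (hbR a) (hbR a'))
        (c (a + a')) (hcC _) (c a + c a') (add_mem (hcC a) (hcC a')) ?_
      rw [← hbc]
      conv_lhs => rw [hbc a, hbc a']
      abel
    have hb_smul : ∀ (k : ℂ) (a : A), b (k • a) = k • b a := by
      intro k a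
      refine huniq (b (k • a)) (hbR _) (k • b a) (Submodule.smul_mem R k (hbR a))
        (c (k • a)) (hcC _) (k • c a) (Submodule.smul_mem C k (hcC a)) ?_
      rw [← hbc, ← smul_add, ← hbc]
    have hb_norm : ∀ a : A, ‖b a‖ ≤ ‖a‖ := by
      intro a
      have := hC_norm (b a) (hbR a) (c a) (hcC a)
      rw [← hbc] at this
      linarith [norm_nonneg (c a)]
    -- the functionals
    have key : ∀ i : ℕ, ∃ F : StrongDual ℂ A, (∀ x, F (ρ x) = x i) ∧ ‖F‖ ≤ ‖σ‖ := by
      intro i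
      have hv_add : ∀ a a' : A, (σ ⟨b (a + a'), hbR _⟩ : lp (fun _ : ℕ => ℂ) 1)
          = σ ⟨b a, hbR a⟩ + σ ⟨b a', hbR a'⟩ := by
        intro a a'
        have h1 : (⟨b (a + a'), hbR _⟩ : R) = ⟨b a, hbR a⟩ + ⟨b a', hbR a'⟩ :=
          Subtype.ext (by simp [hb_add])
        rw [h1, map_add]
      have hv_smul : ∀ (k : ℂ) (a : A), (σ ⟨b (k • a), hbR _⟩ : lp (fun _ : ℕ => ℂ) 1)
          = k • σ ⟨b a, hbR a⟩ := by
        intro k a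
        have h1 : (⟨b (k • a), hbR _⟩ : R) = k • ⟨b a, hbR a⟩ :=
          Subtype.ext (by simp [hb_smul])
        rw [h1, map_smul]
      set fL : A →ₗ[ℂ] ℂ :=
        { toFun := fun a => σ ⟨b a, hbR a⟩ i
          map_add' := by
            intro a a'
            dsimp only
            rw [hv_add a a', lp.coeFn_add, Pi.add_apply]
          map_smul' := by
            intro k a
            dsimp only
            rw [hv_smul k a, lp.coeFn_smul, Pi.smul_apply, RingHom.id_apply, smul_eq_mul] } with hfL
      have hbound : ∀ a : A, ‖fL a‖ ≤ ‖σ‖ * ‖a‖ := by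
        intro a
        calc ‖fL a‖ ≤ ‖σ ⟨b a, hbR a⟩‖ := lp.norm_apply_le_norm one_ne_zero _ i
          _ ≤ ‖σ‖ * ‖(⟨b a, hbR a⟩ : R)‖ := σ.le_opNorm _
          _ ≤ ‖σ‖ * ‖a‖ := by
              have : ‖(⟨b a, hbR a⟩ : R)‖ = ‖b a‖ := rfl
              exact mul_le_mul_of_nonneg_left (this ▸ hb_norm a) (norm_nonneg σ)
      refine ⟨fL.mkContinuous ‖σ‖ hbound, ?_, LinearMap.mkContinuous_norm_le _ (norm_nonneg σ) _⟩
      intro x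
      show fL (ρ x) = x i
      have h1 : (⟨b (ρ x), hbR _⟩ : R) = ρ' x := Subtype.ext (by simp [hb_eqρ, hρ'])
      simp only [hfL, LinearMap.coe_mk, AddHom.coe_mk, h1, hσ]
      rw [show (e.symm : R →L[ℂ] lp (fun _ : ℕ => ℂ) 1) (ρ' x) = e.symm (ρ' x) from rfl]
      rw [show ρ' x = e x from rfl, e.symm_apply_apply]
    refine ⟨‖σ‖, norm_nonneg σ, fun i => ?_⟩
    obtain ⟨F, hF1, hF2⟩ := key i
    exact (hE_min i F hF1).trans hF2
  obtain ⟨M, hM0, hEM⟩ := hM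
  -- supremum
  set S : ℝ := ⨆ i : ℕ, ‖E i‖ with hSdef
  have hbdd : BddAbove (Set.range fun i : ℕ => ‖E i‖) := ⟨M, by rintro _ ⟨i, rfl⟩; exact hEM i⟩
  have hES : ∀ i, ‖E i‖ ≤ S := fun i => le_ciSup hbdd i
  have hS0 : (0 : ℝ) ≤ S := le_trans (norm_nonneg (E 0)) (hES 0)
  -- STEP B: construct η
  have hnorm_sum : ∀ α : lp (fun _ : G => ℂ) 1, HasSum (fun g : G => ‖α g‖) ‖α‖ := by
    intro α
    have := lp.hasSum_norm (p := 1) (by norm_num) α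
    simpa using this
  have hαh : ∀ α : lp (fun _ : G => ℂ) 1, Summable fun i : ℕ => ‖α (h i)‖ := fun α =>
    (hnorm_sum α).summable.comp_injective h_inj
  have hsum : ∀ α : lp (fun _ : G => ℂ) 1, Summable fun i : ℕ => α (h i) • E i := by
    intro α
    refine Summable.of_norm_bounded ((hαh α).mul_right S) fun i => ?_
    rw [norm_smul]
    exact mul_le_mul_of_nonneg_left (hES i) (norm_nonneg _)
  have htsum_le : ∀ α : lp (fun _ : G => ℂ) 1, (∑' i : ℕ, ‖α (h i)‖) ≤ ‖α‖ := by
    intro α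
    exact hasSum_le_inj h h_inj (fun c _ => norm_nonneg _) (fun i => le_rfl)
      (hαh α).hasSum (hnorm_sum α)
  set ηL : lp (fun _ : G => ℂ) 1 →ₗ[ℂ] StrongDual ℂ A :=
    { toFun := fun α => ∑' i : ℕ, α (h i) • E i
      map_add' := by
        intro α β
        dsimp only
        have : ∀ i : ℕ, ((α + β : lp (fun _ : G => ℂ) 1) (h i)) • E i
            = α (h i) • E i + β (h i) • E i := by
          intro i
          exact add_smul (α (h i)) (β (h i)) (E i)
        rw [tsum_congr this, Summable.tsum_add (hsum α) (hsum β)]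
      map_smul' := by
        intro k α
        dsimp only
        have : ∀ i : ℕ, ((k • α : lp (fun _ : G => ℂ) 1) (h i)) • E i
            = k • (α (h i) • E i) := by
          intro i
          rw [lp.coeFn_smul, Pi.smul_apply, smul_smul, smul_eq_mul]
        rw [tsum_congr this, Summable.tsum_const_smul k (hsum α), RingHom.id_apply] } with hηL
  have hηL_bound : ∀ α : lp (fun _ : G => ℂ) 1, ‖ηL α‖ ≤ S * ‖α‖ := by
    intro α
    have h1 : ‖ηL α‖ ≤ ∑' i : ℕ, ‖α (h i) • E i‖ := by
      refine norm_tsum_le_tsum_norm ?_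
      refine Summable.of_nonneg_of_le (fun i => norm_nonneg _) (fun i => ?_)
        ((hαh α).mul_right S)
      rw [norm_smul]
      exact mul_le_mul_of_nonneg_left (hES i) (norm_nonneg _)
    have h2 : (∑' i : ℕ, ‖α (h i) • E i‖) ≤ ∑' i : ℕ, ‖α (h i)‖ * S := by
      refine Summable.tsum_le_tsum (fun i => ?_) ?_ ((hαh α).mul_right S)
      · rw [norm_smul]
        exact mul_le_mul_of_nonneg_left (hES i) (norm_nonneg _)
      · refine Summable.of_nonneg_of_le (fun i => norm_nonneg _) (fun i => ?_)
          ((hαh α).mul_right S)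
        rw [norm_smul]
        exact mul_le_mul_of_nonneg_left (hES i) (norm_nonneg _)
    have h3 : (∑' i : ℕ, ‖α (h i)‖ * S) = (∑' i : ℕ, ‖α (h i)‖) * S := tsum_mul_right
    have h4 : (∑' i : ℕ, ‖α (h i)‖) * S ≤ ‖α‖ * S :=
      mul_le_mul_of_nonneg_right (htsum_le α) hS0
    calc ‖ηL α‖ ≤ ∑' i : ℕ, ‖α (h i) • E i‖ := h1
      _ ≤ ∑' i : ℕ, ‖α (h i)‖ * S := h2
      _ = (∑' i : ℕ, ‖α (h i)‖) * S := h3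
      _ ≤ ‖α‖ * S := h4
      _ = S * ‖α‖ := mul_comm _ _
  set η : lp (fun _ : G => ℂ) 1 →L[ℂ] StrongDual ℂ A := ηL.mkContinuous S hηL_bound with hη
  have hη_hasSum : ∀ α : lp (fun _ : G => ℂ) 1,
      HasSum (fun i : ℕ => α (h i) • E i) (η α) := fun α => (hsum α).hasSum
  have hη_norm : ‖η‖ ≤ S := LinearMap.mkContinuous_norm_le _ hS0 _
  -- STEP C: construct τ
  have hnorm_sumA : ∀ f : lp (fun _ : G => A) 1, HasSum (fun g : G => ‖f g‖) ‖f‖ := by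
    intro f
    have := lp.hasSum_norm (p := 1) (by norm_num) f
    simpa using this
  have hK : ∀ g : G, ‖η (lp.single 1 g 1)‖ ≤ ‖η‖ := by
    intro g
    have h1 : ‖(lp.single 1 g (1 : ℂ) : lp (fun _ : G => ℂ) 1)‖ = ‖(1 : ℂ)‖ :=
      by rw [lp.norm_single (p := 1) (by norm_num)]
    calc ‖η (lp.single 1 g 1)‖ ≤ ‖η‖ * ‖(lp.single 1 g (1 : ℂ) : lp (fun _ : G => ℂ) 1)‖ :=
          η.le_opNorm _
      _ = ‖η‖ := by rw [h1, norm_one, mul_one]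
  have hsumτ : ∀ f : lp (fun _ : G => A) 1,
      Summable fun g : G => η (lp.single 1 g 1) (f g) := by
    intro f
    refine Summable.of_norm_bounded ((hnorm_sumA f).summable.mul_left ‖η‖) fun g => ?_
    calc ‖η (lp.single 1 g 1) (f g)‖ ≤ ‖η (lp.single 1 g 1)‖ * ‖f g‖ :=
          (η (lp.single 1 g 1)).le_opNorm _
      _ ≤ ‖η‖ * ‖f g‖ := mul_le_mul_of_nonneg_right (hK g) (norm_nonneg _)
  set τL : lp (fun _ : G => A) 1 →ₗ[ℂ] ℂ :=
    { toFun := fun f => ∑' g : G, η (lp.single 1 g 1) (f g)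
      map_add' := by
        intro f f'
        dsimp only
        have : ∀ g : G, η (lp.single 1 g 1) ((f + f' : lp (fun _ : G => A) 1) g)
            = η (lp.single 1 g 1) (f g) + η (lp.single 1 g 1) (f' g) := by
          intro g
          rw [lp.coeFn_add, Pi.add_apply, map_add]
        rw [tsum_congr this, Summable.tsum_add (hsumτ f) (hsumτ f')]
      map_smul' := by
        intro k f
        dsimp only
        have : ∀ g : G, η (lp.single 1 g 1) ((k • f : lp (fun _ : G => A) 1) g)
            = k • (η (lp.single 1 g 1) (f g)) := by
          intro g
          rw [lp.coeFn_smul, Pi.smul_apply, map_smul]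
        rw [tsum_congr this, Summable.tsum_const_smul k (hsumτ f), RingHom.id_apply] } with hτL
  have hτL_bound : ∀ f : lp (fun _ : G => A) 1, ‖τL f‖ ≤ ‖η‖ * ‖f‖ := by
    intro f
    have h1 : ‖τL f‖ ≤ ∑' g : G, ‖η (lp.single 1 g 1) (f g)‖ := by
      refine norm_tsum_le_tsum_norm ?_
      refine Summable.of_nonneg_of_le (fun g => norm_nonneg _) (fun g => ?_)
        ((hnorm_sumA f).summable.mul_left ‖η‖)
      calc ‖η (lp.single 1 g 1) (f g)‖ ≤ ‖η (lp.single 1 g 1)‖ * ‖f g‖ :=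
            (η (lp.single 1 g 1)).le_opNorm _
        _ ≤ ‖η‖ * ‖f g‖ := mul_le_mul_of_nonneg_right (hK g) (norm_nonneg _)
    have h2 : (∑' g : G, ‖η (lp.single 1 g 1) (f g)‖) ≤ ∑' g : G, ‖η‖ * ‖f g‖ := by
      refine Summable.tsum_le_tsum (fun g => ?_) ?_ ((hnorm_sumA f).summable.mul_left ‖η‖)
      · calc ‖η (lp.single 1 g 1) (f g)‖ ≤ ‖η (lp.single 1 g 1)‖ * ‖f g‖ :=
              (η (lp.single 1 g 1)).le_opNorm _
          _ ≤ ‖η‖ * ‖f g‖ := mul_le_mul_of_nonneg_right (hK g) (norm_nonneg _)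
      · refine Summable.of_nonneg_of_le (fun g => norm_nonneg _) (fun g => ?_)
          ((hnorm_sumA f).summable.mul_left ‖η‖)
        calc ‖η (lp.single 1 g 1) (f g)‖ ≤ ‖η (lp.single 1 g 1)‖ * ‖f g‖ :=
              (η (lp.single 1 g 1)).le_opNorm _
          _ ≤ ‖η‖ * ‖f g‖ := mul_le_mul_of_nonneg_right (hK g) (norm_nonneg _)
    have h3 : (∑' g : G, ‖η‖ * ‖f g‖) = ‖η‖ * ∑' g : G, ‖f g‖ := tsum_mul_left
    rw [h3, (hnorm_sumA f).tsum_eq] at h2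
    exact h1.trans h2
  set τ : StrongDual ℂ (lp (fun _ : G => A) 1) := τL.mkContinuous ‖η‖ hτL_bound with hτ
  have hτ_single : ∀ (g : G) (a : A), τ (lp.single 1 g a) = η (lp.single 1 g 1) a := by
    intro g a
    show (∑' g' : G, η (lp.single 1 g' 1) ((lp.single 1 g a : lp (fun _ : G => A) 1) g'))
      = η (lp.single 1 g 1) a
    have hz : ∀ g' : G, g' ≠ g →
        η (lp.single 1 g' 1) ((lp.single 1 g a : lp (fun _ : G => A) 1) g') = 0 := by
      intro g' hg'
      rw [lp.single_apply_ne _ _ _ hg', map_zero]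
    rw [tsum_eq_single g hz, lp.single_apply_self]
  refine ⟨η, hη_hasSum, hη_norm.trans_eq rfl, τ, hτ_single, ?_⟩
  intro n
  have hEn : η (lp.single 1 (h n) 1) = E n := by
    have h1 := hη_hasSum (lp.single 1 (h n) 1)
    have h2 : HasSum (fun i : ℕ => ((lp.single 1 (h n) (1 : ℂ) : lp (fun _ : G => ℂ) 1) (h i)) • E i)
        (E n) := by
      have h3 : ∀ i : ℕ, i ≠ n →
          ((lp.single 1 (h n) (1 : ℂ) : lp (fun _ : G => ℂ) 1) (h i)) • E i = 0 := by
        intro i hi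
        rw [show ((lp.single 1 (h n) (1 : ℂ) : lp (fun _ : G => ℂ) 1) (h i)) = 0 from lp.single_apply_ne _ _ _ (fun hc => hi (h_inj hc))]; exact zero_smul ℂ (E i)
      have h4 : ((lp.single 1 (h n) (1 : ℂ) : lp (fun _ : G => ℂ) 1) (h n)) • E n = E n := by
        rw [lp.single_apply_self, one_smul]
      simpa [h4] using hasSum_single (f := fun i : ℕ =>
        ((lp.single 1 (h n) (1 : ℂ) : lp (fun _ : G => ℂ) 1) (h i)) • E i) n h3
    exact h1.unique h2
  rw [hτ_single (h n) (ρ (lp.single 1 n 1)), hEn, hE_ext n (lp.single 1 n 1),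
    lp.single_apply_self]
end
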